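/- Let T be a tree on [n], run ordered DFS from the root, and let v_i be the i-th explored vertex and O_i the stack of open vertices at step i. Then every vertex of O_i other than v_i is at graph distance exactly 1 from the path in T from the root to v_i; equivalently, each vertex of O_i \ {v_i} is a child of an ancestor of v_i (including possibly of v_i itself) that has not yet been explored. -/

import Mathlib

open scoped Classical
noncomputable section

namespace RandomGraphs

variable {n : ℕ}

/-- One step of ordered depth-first search (oDFS): the state is the pair
(stack of open vertices, set of explored vertices). The first vertex of the
stack is explored: it is removed and its unseen neighbors are prepended to the
stack in increasing order. -/
def dfsStep (G : SimpleGraph (Fin n)) :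
    List (Fin n) × Finset (Fin n) → List (Fin n) × Finset (Fin n) :=
  fun st =>
    match st with
    | ([], A) => ([], A)
    | (v :: rest, A) =>
        (((G.neighborFinset v).filter
            (fun w => w ∉ A ∧ w ∉ (v :: rest))).sort (· ≤ ·) ++ rest,
          insert v A)

/-- The oDFS state at time `i`, started from the stack containing only vertex `0`
(the vertex with smallest label). -/
def dfsState (G : SimpleGraph (Fin n)) (i : ℕ) :
    List (Fin n) × Finset (Fin n) :=
  (dfsStep G)^[i] ((List.finRange n).take 1, ∅)

/-- The stack `O_i` of open vertices at time `i`. -/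
def stackAt (G : SimpleGraph (Fin n)) (i : ℕ) : List (Fin n) :=
  (dfsState G i).1

/-- The depth-first walk `X(i) = |O_i| - 1` of a connected graph. -/
def dfw (G : SimpleGraph (Fin n)) (i : ℕ) : ℕ :=
  (stackAt G i).length - 1

/-- The area `a(T) = Σ_{i=1}^{n-1} X(i)` of a tree. -/
def area (G : SimpleGraph (Fin n)) : ℕ :=
  ∑ i ∈ Finset.Ico 1 n, dfw G i

/-- The set of (unordered) edges permitted by oDFS run on `T`: non-edges `uv`
of `T` such that both `u` and `v` lie in the stack `O_i` for some `i < n`. -/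
def permittedSet (T : SimpleGraph (Fin n)) : Set (Sym2 (Fin n)) :=
  {e | ∃ u v : Fin n, e = s(u, v) ∧ u ≠ v ∧ ¬ T.Adj u v ∧
    ∃ i < n, u ∈ stackAt T i ∧ v ∈ stackAt T i}

/-- The set of neighbors of the currently explored vertex which have not been
seen before (these become new open vertices, and the corresponding edges are
the tree edges discovered at time `i`). -/
def newNbrs (G : SimpleGraph (Fin n)) (i : ℕ) : Finset (Fin n) :=
  match dfsState G i with
  | ([], _) => ∅
  | (v :: rest, A) => (G.neighborFinset v).filter (fun w => w ∉ A ∧ w ∉ (v :: rest))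

/-- The depth-first tree `T(G)` of a connected graph `G`: its edges join
the vertex explored at step `i` to each of its previously-unseen neighbors. -/
def dfTree (G : SimpleGraph (Fin n)) : SimpleGraph (Fin n) :=
  SimpleGraph.fromRel (fun u v =>
    ∃ i < n, (stackAt G i).head? = some u ∧ v ∈ newNbrs G i)


variable [NeZero n] {T : SimpleGraph (Fin n)}


noncomputable def pathTo (hT : T.IsTree) (u : Fin n) : T.Walk 0 u :=
  (hT.existsUnique_path 0 u).exists.choose

lemma pathTo_isPath (hT : T.IsTree) (u : Fin n) : (pathTo hT u).IsPath :=
  (hT.existsUnique_path 0 u).exists.choose_spec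

lemma pathTo_unique (hT : T.IsTree) {u : Fin n} (P : T.Walk 0 u) (hP : P.IsPath) :
    P = pathTo hT u :=
  (hT.existsUnique_path 0 u).unique hP (pathTo_isPath hT u)

def anc (hT : T.IsTree) (u : Fin n) : Set (Fin n) :=
  {w | w ∈ (pathTo hT u).support ∧ w ≠ u}

lemma mem_support_iff_anc (hT : T.IsTree) (u w : Fin n) :
    w ∈ (pathTo hT u).support ↔ w ∈ anc hT u ∨ w = u := by
  constructor
  · intro h
    by_cases hw : w = u
    · exact Or.inr hw
    · exact Or.inl ⟨h, hw⟩
  · rintro (⟨h, _⟩ | rfl)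
    · exact h
    · exact SimpleGraph.Walk.end_mem_support _

lemma anc_of_adj (hT : T.IsTree) {v u : Fin n} (h : T.Adj v u)
    (hu : u ∉ (pathTo hT v).support) :
    anc hT u = {w | w ∈ (pathTo hT v).support} := by
  have hq : ((pathTo hT v).concat h).IsPath := by
    rw [SimpleGraph.Walk.isPath_def, SimpleGraph.Walk.support_concat,
      List.nodup_append']
    refine ⟨(pathTo_isPath hT v).support_nodup, List.nodup_singleton u, ?_⟩
    intro w hw hw'
    simp only [List.mem_singleton] at hw'
    exact hu (hw' ▸ hw)
  have hpu : pathTo hT u = (pathTo hT v).concat h :=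
    (pathTo_unique hT _ hq).symm
  ext w
  simp only [anc, Set.mem_setOf_eq, hpu, SimpleGraph.Walk.support_concat,
    List.concat_eq_append, List.mem_append, List.mem_singleton]
  constructor
  · rintro ⟨h1 | rfl, h2⟩
    · exact h1
    · exact absurd rfl h2
  · intro hw
    exact ⟨Or.inl hw, fun hwu => hu (hwu ▸ hw)⟩

def Inv (hT : T.IsTree) (st : List (Fin n) × Finset (Fin n)) : Prop :=
  st.1.Nodup ∧ (∀ u ∈ st.1, u ∉ st.2) ∧
  st.1.Pairwise (fun a b => anc hT b ⊆ anc hT a) ∧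
  (∀ w, st.1.head? = some w → anc hT w ⊆ ↑st.2) ∧
  (∀ u ∈ st.1.tail, ∃ w ∈ anc hT u, T.Adj w u)

lemma inv_step (hT : T.IsTree) (st : List (Fin n) × Finset (Fin n))
    (h : Inv hT st) : Inv hT (dfsStep T st) := by
  obtain ⟨O, A⟩ := st
  match O with
  | [] => exact h
  | v :: rest =>
    obtain ⟨h1, h2, h3, h4, h5⟩ := h
    simp only at h1 h2 h3 h4 h5
    set S := (T.neighborFinset v).filter (fun w => w ∉ A ∧ w ∉ (v :: rest)) with hS
    set L := S.sort (· ≤ ·) with hLdef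
    have hL : ∀ u ∈ L, T.Adj v u ∧ u ∉ A ∧ u ≠ v ∧ u ∉ rest := by
      intro u hu
      rw [hLdef, Finset.mem_sort, hS, Finset.mem_filter,
        SimpleGraph.mem_neighborFinset] at hu
      obtain ⟨hadj, hA, hlist⟩ := hu
      rw [List.mem_cons] at hlist
      push_neg at hlist
      exact ⟨hadj, hA, hlist.1, hlist.2⟩
    have hvA : anc hT v ⊆ ↑A := h4 v rfl
    have hK : ∀ u ∈ L, anc hT u = {w | w ∈ (pathTo hT v).support} := by
      intro u hu
      obtain ⟨hadj, hA, hne, _⟩ := hL u hu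
      refine anc_of_adj hT hadj ?_
      intro hmem
      rcases (mem_support_iff_anc hT v u).mp hmem with hanc | rfl
      · exact hA (hvA hanc)
      · exact hne rfl
    have hstep : dfsStep T (v :: rest, A) = (L ++ rest, insert v A) := rfl
    rw [hstep]
    rw [List.nodup_cons] at h1
    refine ⟨?_, ?_, ?_, ?_, ?_⟩
    · -- Nodup
      refine List.Nodup.append (Finset.sort_nodup _ _) h1.2 ?_
      intro u hu
      exact (hL u hu).2.2.2
    · -- not in insert v A
      intro u hu
      rw [List.mem_append] at hu
      simp only [Finset.mem_insert]
      push_neg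
      rcases hu with hu | hu
      · exact ⟨(hL u hu).2.2.1, (hL u hu).2.1⟩
      · exact ⟨fun h => h1.1 (h ▸ hu), h2 u (List.mem_cons_of_mem _ hu)⟩
    · -- Pairwise
      rw [List.pairwise_append]
      refine ⟨?_, (List.pairwise_cons.mp h3).2, ?_⟩
      · refine List.Pairwise.imp_of_mem ?_ (List.pairwise_of_forall_mem_list fun a _ b _ => True.intro)
        intro a b ha hb _
        rw [hK a ha, hK b hb]
      · intro a ha b hb
        rw [hK a ha]
        intro w hw
        exact (mem_support_iff_anc hT v w).mpr
          (Or.inl ((List.pairwise_cons.mp h3).1 b hb hw))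
    · -- head? ⊆ insert v A
      intro w hw x hx
      have hwmem : w ∈ L ++ rest := List.mem_of_mem_head? (hw ▸ rfl)
      rw [List.mem_append] at hwmem
      rcases hwmem with hw' | hw'
      · rw [hK w hw'] at hx
        rcases (mem_support_iff_anc hT v x).mp hx with hanc | rfl
        · exact Finset.mem_insert_of_mem (hvA hanc)
        · exact Finset.mem_insert_self _ _
      · exact Finset.mem_insert_of_mem (hvA ((List.pairwise_cons.mp h3).1 w hw' hx))
    · -- tail adjacency
      intro u hu
      have hu' := List.mem_of_mem_tail hu
      rw [List.mem_append] at hu'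
      rcases hu' with hu' | hu'
      · refine ⟨v, ?_, (hL u hu').1⟩
        rw [hK u hu']
        exact SimpleGraph.Walk.end_mem_support _
      · exact h5 u hu'

lemma inv_dfsState [NeZero n] (hT : T.IsTree) (i : ℕ) : Inv hT (dfsState T i) := by
  induction i with
  | zero =>
    have hn : ∃ m, n = m + 1 := ⟨n - 1, (Nat.succ_pred_eq_of_pos (Nat.pos_of_ne_zero (NeZero.ne n))).symm⟩
    obtain ⟨m, rfl⟩ := hn
    have hstate : dfsState T 0 = ([(0 : Fin (m+1))], ∅) := by
      simp [dfsState, List.finRange_succ]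
    rw [hstate]
    have hp0 : pathTo hT (0 : Fin (m+1)) = SimpleGraph.Walk.nil := by
      have := pathTo_isPath hT (0 : Fin (m+1))
      exact (SimpleGraph.Walk.isPath_iff_eq_nil.mp this)
    have hanc0 : anc hT (0 : Fin (m+1)) = ∅ := by
      ext w
      simp [anc, hp0]
    refine ⟨List.nodup_singleton _, by simp, List.pairwise_singleton _ _, ?_, by simp⟩
    intro w hw
    simp only [List.head?_cons, Option.some.injEq] at hw
    subst hw
    rw [hanc0]
    simp
  | succ k ih =>
    have : dfsState T (k + 1) = dfsStep T (dfsState T k) := by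
      simp [dfsState, Function.iterate_succ_apply']
    rw [this]
    exact inv_step hT _ ih


end RandomGraphs

open RandomGraphs in
/-- Run ordered DFS on a tree `T` on `[n]` from the root
(vertex `1`, here `0 : Fin n`).  At any step `i`, every vertex `u` of the
stack `O_i` other than the currently explored vertex `v_i` is unexplored and
lies at graph distance exactly `1` from the path from the root to `v_i`:
`u` is not on that path, but is adjacent to (i.e. is a child of) one of its
vertices (an ancestor of `v_i`, possibly `v_i` itself). -/
theorem stack_vertices_adjacent_to_root_path (n : ℕ) [NeZero n]
    (T : SimpleGraph (Fin n)) (hT : T.IsTree) (i : ℕ) (hi : i < n)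
    (v : Fin n) (hv : (stackAt T i).head? = some v)
    (u : Fin n) (hu : u ∈ (stackAt T i).tail) :
    u ∉ (dfsState T i).2 ∧
      ∀ P : T.Walk 0 v, P.IsPath →
        u ∉ P.support ∧ ∃ w ∈ P.support, T.Adj w u := by
  obtain ⟨h1, h2, h3, h4, h5⟩ := RandomGraphs.inv_dfsState (T := T) hT i
  obtain ⟨t, hOeq⟩ : ∃ t, stackAt T i = v :: t := by
    cases hSt : stackAt T i with
    | nil => rw [hSt] at hv; simp at hv
    | cons b t =>
      rw [hSt] at hv
      simp only [List.head?_cons, Option.some.injEq] at hv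
      exact ⟨t, by rw [hv]⟩
  have hO1 : (dfsState T i).1 = v :: t := hOeq
  rw [hOeq] at hu
  simp only [List.tail_cons] at hu
  rw [hO1] at h1 h2 h3 h5
  simp only [List.tail_cons] at h5
  have huA : u ∉ (dfsState T i).2 := h2 u (List.mem_cons_of_mem _ hu)
  have hancvA : anc hT v ⊆ ↑(dfsState T i).2 := h4 v (by rw [hO1]; rfl)
  have hancsub : anc hT u ⊆ anc hT v := (List.pairwise_cons.mp h3).1 u hu
  refine ⟨huA, ?_⟩
  intro P hP
  have hPe : P = pathTo hT v := pathTo_unique hT P hP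
  constructor
  · rw [hPe]
    intro hmem
    rcases (mem_support_iff_anc hT v u).mp hmem with hanc | rfl
    · exact huA (hancvA hanc)
    · exact (List.nodup_cons.mp h1).1 hu
  · obtain ⟨w, hw, hadj⟩ := h5 u hu
    refine ⟨w, ?_, hadj⟩
    rw [hPe]
    exact (mem_support_iff_anc hT v w).mpr (Or.inl (hancsub hw))
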